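/- In the tree T over {a,b} with vertex set {a^n b^m : n ≥ 0, m ≤ n+1} where every vertex has an ex-edge, the subtrees rooted at the vertices a^k (k ≥ 0) are pairwise non-bisimilar; hence T has infinitely many subtrees up to bisimilarity and is not the unfolding of any finite labelled transition system. -/

import Mathlib

/-- A rooted edge-labelled graph used to represent synchronization trees over an
alphabet `A`.  Edge labels are in `Option A`, where `none` is the special
exit (termination) label `ex` and `some a` is an action label `a ∈ A`. -/
structure SyncTree (A : Type) where
  V : Type
  root : V
  edge : V → Option A → V → Prop

namespace SyncTree

variable {A : Type}

/-- Reachability along edges. -/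
def Reaches (t : SyncTree A) (u v : t.V) : Prop :=
  Relation.ReflTransGen (fun x y => ∃ l, t.edge x l y) u v

/-- `t` is a genuine synchronization tree: every vertex is reachable from the
root, every vertex has at most one incoming edge, the root has no incoming
edge, and targets of exit edges are leaves. -/
def IsTree (t : SyncTree A) : Prop :=
  (∀ v, t.Reaches t.root v) ∧
  (∀ u₁ u₂ l₁ l₂ v, t.edge u₁ l₁ v → t.edge u₂ l₂ v → u₁ = u₂ ∧ l₁ = l₂) ∧
  (∀ u l, ¬ t.edge u l t.root) ∧
  (∀ u v, t.edge u none v → ∀ l w, ¬ t.edge v l w)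

/-- No vertex has two equally-labelled outgoing edges. -/
def Deterministic (t : SyncTree A) : Prop :=
  ∀ u l v₁ v₂, t.edge u l v₁ → t.edge u l v₂ → v₁ = v₂

/-- Bisimilarity of the trees `t` and `t'`. -/
def Bisimilar (t t' : SyncTree A) : Prop :=
  ∃ R : t.V → t'.V → Prop,
    R t.root t'.root ∧
    (∀ u u', R u u' → ∀ l v, t.edge u l v → ∃ v', t'.edge u' l v' ∧ R v v') ∧
    (∀ u u', R u u' → ∀ l v', t'.edge u' l v' → ∃ v, t.edge u l v ∧ R v v')

/-- The reachable vertices of `t` (the vertices of the tree proper). -/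
def Rt (t : SyncTree A) : Type := {v : t.V // t.Reaches t.root v}

/-- An isomorphism between (the reachable parts of) two synchronization trees:
a bijection on vertices preserving the root, the edges and the labels. -/
structure Isomorphism (t t' : SyncTree A) where
  toEquiv : t.Rt ≃ t'.Rt
  map_root : (toEquiv ⟨t.root, Relation.ReflTransGen.refl⟩).1 = t'.root
  map_edge : ∀ (u v : t.Rt) (l : Option A),
    t.edge u.1 l v.1 ↔ t'.edge (toEquiv u).1 l (toEquiv v).1

def Isomorphic (t t' : SyncTree A) : Prop := Nonempty (t.Isomorphism t')

/-- A morphism of synchronization trees: a function on vertices preserving the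
root, the edges and the labels. -/
structure Hom (t t' : SyncTree A) where
  toFun : t.V → t'.V
  map_root : toFun t.root = t'.root
  map_edge : ∀ u l v, t.edge u l v → t'.edge (toFun u) l (toFun v)

/-- `LabeledPath t u w v` : there is a path of `A`-labelled edges from `u` to
`v` whose labels spell the word `w`. -/
inductive LabeledPath (t : SyncTree A) : t.V → List A → t.V → Prop
  | refl (v : t.V) : LabeledPath t v [] v
  | step {u v w : t.V} {a : A} {word : List A} :
      t.edge u (some a) v → LabeledPath t v word w → LabeledPath t u (a :: word) w

/-- The path language of `t`: the words in `A*` labelling a path from the root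
to the source of an exit edge. -/
def pathLanguage (t : SyncTree A) : Language A :=
  { w | ∃ u v, t.LabeledPath t.root w u ∧ t.edge u none v }

/-- The tree `0` with a single vertex and no edges. -/
def zero : SyncTree A := ⟨PUnit, PUnit.unit, fun _ _ _ => False⟩

/-- The tree `1` with a single exit edge. -/
def one : SyncTree A := ⟨Bool, false, fun u l v => u = false ∧ l = none ∧ v = true⟩

/-- The tree denoted by the letter `a`: an `a`-edge followed by an exit edge. -/
def letter (a : A) : SyncTree A :=
  ⟨Fin 3, 0, fun u l v => (u = 0 ∧ l = some a ∧ v = 1) ∨ (u = 1 ∧ l = none ∧ v = 2)⟩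

/-- The sum `t + t'`, obtained by merging the roots of disjoint copies. -/
def sum (t t' : SyncTree A) : SyncTree A where
  V := t.V ⊕ t'.V
  root := Sum.inl t.root
  edge u l v :=
    match u, v with
    | Sum.inl x, Sum.inl y => t.edge x l y
    | Sum.inl x, Sum.inr y => x = t.root ∧ t'.edge t'.root l y
    | Sum.inr x, Sum.inr y => t'.edge x l y
    | Sum.inr _, Sum.inl _ => False

/-- The exit edges of `t`. -/
def ExE (t : SyncTree A) : Type := {p : t.V × t.V // t.edge p.1 none p.2}

/-- The sequential product `t · t'`, obtained by replacing each exit edge of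
`t` by a fresh copy of `t'`. -/
def seq (t t' : SyncTree A) : SyncTree A where
  V := t.V ⊕ (t.ExE × t'.V)
  root := Sum.inl t.root
  edge u l v :=
    match u, v with
    | Sum.inl x, Sum.inl y => (∃ a, l = some a) ∧ t.edge x l y
    | Sum.inl x, Sum.inr p => p.1.1.1 = x ∧ t'.edge t'.root l p.2
    | Sum.inr p, Sum.inr q => p.1 = q.1 ∧ t'.edge p.2 l q.2
    | Sum.inr _, Sum.inl _ => False

end SyncTree

open SyncTree

/-- The two-letter alphabet `{a, b}`. -/
inductive AB : Type
  | a | b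
deriving DecidableEq

/-- Vertices `(n, m)` with `m ≤ n + 1`, standing for the word `aⁿbᵐ`. -/
def TV : Type := {p : ℕ × ℕ // p.2 ≤ p.1 + 1}

/-- The tree `T` (shifted so that its root is the vertex `aᵏ`): from `aⁿ`
there is an `a`-edge to `aⁿ⁺¹` and a `b`-edge to `aⁿb`; from `aⁿbᵐ`
(`m ≤ n`) there is a `b`-edge to `aⁿbᵐ⁺¹`; and every vertex is the source of
an exit edge (the second copy of the vertices serves as exit targets). -/
def Tat (k : ℕ) : SyncTree AB where
  V := TV ⊕ TV
  root := Sum.inl ⟨(k, 0), by simp⟩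
  edge u l v :=
    match u, v with
    | Sum.inl p, Sum.inl q =>
        (l = some AB.a ∧ p.1.2 = 0 ∧ q.1 = (p.1.1 + 1, 0)) ∨
        (l = some AB.b ∧ q.1 = (p.1.1, p.1.2 + 1))
    | Sum.inl p, Sum.inr q => l = none ∧ p = q
    | _, _ => False

/-- The unfolding of a labelled transition system with state space `S`,
transition relation `tr` and initial state `init`: vertices are the finite
sequences of (label, state) steps from `init`. -/
def ltsUnfold {S : Type} (tr : S → Option AB → S → Prop) (init : S) :
    SyncTree AB where
  V := List (Option AB × S)
  root := []
  edge p l q := ∃ s : S,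
    q = p ++ [(l, s)] ∧ tr (p.foldl (fun _ step => step.2) init) l s

/-- `HasB t u m` : there is a path of `m` consecutive `b`-edges from `u`. -/
def HasB (t : SyncTree AB) (u : t.V) (m : ℕ) : Prop :=
  ∃ w, t.LabeledPath u (List.replicate m AB.b) w

lemma hasB_upper {K : ℕ} : ∀ (m j n : ℕ) (h : j ≤ n + 1)
    (w : (Tat K).V), (Tat K).LabeledPath (Sum.inl ⟨(n, j), h⟩) (List.replicate m AB.b) w →
    j + m ≤ n + 1 := by
  intro m
  induction m with
  | zero => intro j n h w _; simpa using h
  | succ m ih =>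
    intro j n h w hp
    rw [List.replicate_succ] at hp
    match hp with
    | .step he hp =>
      rename_i v
      match v, he with
      | Sum.inl q, he =>
        rcases he with ⟨ha, _⟩ | ⟨_, hq⟩
        · simp at ha
        · have hq' : q = ⟨(n, j + 1), by have := q.2; rw [hq] at this; exact this⟩ :=
            Subtype.ext hq
          rw [hq'] at hp
          have := ih (j + 1) n _ w hp
          omega
      | Sum.inr q, he => exact absurd he.1 (by simp)

lemma hasB_upper' {K : ℕ} {m j n : ℕ} {h : j ≤ n + 1}
    (hb : HasB (Tat K) (Sum.inl ⟨(n, j), h⟩) m) : j + m ≤ n + 1 := by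
  obtain ⟨w, hw⟩ := hb
  exact hasB_upper m j n h w hw

lemma hasB_lower {K : ℕ} : ∀ (m j n : ℕ) (h : j ≤ n + 1), j + m ≤ n + 1 →
    HasB (Tat K) (Sum.inl ⟨(n, j), h⟩) m := by
  intro m
  induction m with
  | zero => intro j n h _; exact ⟨_, .refl _⟩
  | succ m ih =>
    intro j n h hm
    obtain ⟨w, hw⟩ := ih (j + 1) n (by omega) (by omega)
    refine ⟨w, ?_⟩
    rw [List.replicate_succ]
    refine .step (v := Sum.inl ⟨(n, j + 1), by omega⟩) ?_ hw
    exact Or.inr ⟨rfl, rfl⟩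

lemma hasB_of_bisim {t t' : SyncTree AB} (R : t.V → t'.V → Prop)
    (hf : ∀ u u', R u u' → ∀ l v, t.edge u l v → ∃ v', t'.edge u' l v' ∧ R v v') :
    ∀ (m : ℕ) (u : t.V) (u' : t'.V), R u u' → HasB t u m → HasB t' u' m := by
  intro m
  induction m with
  | zero => intro u u' _ _; exact ⟨_, .refl _⟩
  | succ m ih =>
    intro u u' hR ⟨w, hw⟩
    rw [List.replicate_succ] at hw
    cases hw with
    | step he hp =>
      obtain ⟨v', he', hR'⟩ := hf _ _ hR _ _ he
      obtain ⟨w', hw'⟩ := ih _ _ hR' ⟨_, hp⟩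
      exact ⟨w', by rw [List.replicate_succ]; exact .step he' hw'⟩

lemma reaches_ak (k : ℕ) : (Tat 0).Reaches (Tat 0).root (Sum.inl ⟨(k, 0), by simp⟩) := by
  induction k with
  | zero => exact .refl
  | succ k ih => exact .tail ih ⟨some AB.a, Or.inl ⟨rfl, rfl, rfl⟩⟩

lemma hasB_iso {t t' : SyncTree AB} (e : t.Isomorphism t') :
    ∀ (m : ℕ) (u : t.Rt), (HasB t u.1 m ↔ HasB t' (e.toEquiv u).1 m) := by
  intro m
  induction m with
  | zero => intro u; constructor <;> (intro; exact ⟨_, .refl _⟩)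
  | succ m ih =>
    intro u
    constructor
    · rintro ⟨w, hw⟩
      rw [List.replicate_succ] at hw
      cases hw with
      | step he hp =>
        rename_i v
        have hv : t.Reaches t.root v := u.2.tail ⟨_, he⟩
        have he' := (e.map_edge u ⟨v, hv⟩ _).mp he
        obtain ⟨w', hw'⟩ := (ih ⟨v, hv⟩).mp ⟨_, hp⟩
        exact ⟨w', by rw [List.replicate_succ]; exact .step he' hw'⟩
    · rintro ⟨w, hw⟩
      rw [List.replicate_succ] at hw
      cases hw with
      | step he hp =>
        rename_i v'
        have hv' : t'.Reaches t'.root v' := (e.toEquiv u).2.tail ⟨_, he⟩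
        set vr : t.Rt := e.toEquiv.symm ⟨v', hv'⟩ with hvr
        have hev : (e.toEquiv vr).1 = v' := by
          rw [hvr]; exact congrArg Subtype.val (e.toEquiv.apply_symm_apply (⟨v', hv'⟩ : t'.Rt))
        have he2 : t.edge u.1 (some AB.b) vr.1 := by
          rw [e.map_edge u vr, hev]; exact he
        obtain ⟨w', hw'⟩ := (ih vr).mpr (by rw [hev]; exact ⟨_, hp⟩)
        exact ⟨w', by rw [List.replicate_succ]; exact .step he2 hw'⟩

lemma hasB_state {S : Type} (tr : S → Option AB → S → Prop) (init : S) :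
    ∀ (m : ℕ) (u u' : List (Option AB × S)),
      u.foldl (fun _ step => step.2) init = u'.foldl (fun _ step => step.2) init →
      HasB (ltsUnfold tr init) u m → HasB (ltsUnfold tr init) u' m := by
  intro m
  induction m with
  | zero => intro u u' _ _; exact ⟨_, .refl _⟩
  | succ m ih =>
    intro u u' hst ⟨w, hw⟩
    rw [List.replicate_succ] at hw
    match hw with
    | .step he hp =>
      obtain ⟨s, rfl, htr⟩ := he
      have he' : (ltsUnfold tr init).edge u' (some AB.b) (u' ++ [(some AB.b, s)]) :=
        ⟨s, rfl, by rw [← hst]; exact htr⟩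
      have hst2 : (u ++ [(some AB.b, s)]).foldl (fun _ step => step.2) init =
          (u' ++ [(some AB.b, s)]).foldl (fun _ step => step.2) init := by
        simp
      obtain ⟨w', hw'⟩ := ih _ _ hst2 ⟨_, hp⟩
      exact ⟨w', by rw [List.replicate_succ]; exact .step he' hw'⟩

/-- The subtrees of `T` rooted at the vertices `aᵏ` are pairwise
non-bisimilar; hence `T` has infinitely many subtrees up to bisimilarity and
is not the unfolding of any finite labelled transition system. -/
theorem T_subtrees_pairwise_nonbisimilar_and_not_finite_unfolding :
    (∀ k l : ℕ, k ≠ l → ¬ (Tat k).Bisimilar (Tat l)) ∧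
    (∀ (S : Type), Finite S → ∀ (init : S) (tr : S → Option AB → S → Prop),
      ¬ (Tat 0).Isomorphic (ltsUnfold tr init)) := by
  constructor
  · rintro k l hkl ⟨R, hR, hf, hb⟩
    have h1 : HasB (Tat k) (Tat k).root (k + 1) :=
      hasB_lower (k + 1) 0 k (by simp) (by omega)
    have h2 := hasB_of_bisim R hf (k + 1) _ _ hR h1
    have hkle : k ≤ l := by
      have := hasB_upper' (K := l) h2; omega
    have h1' : HasB (Tat l) (Tat l).root (l + 1) :=
      hasB_lower (l + 1) 0 l (by simp) (by omega)
    have h2' := hasB_of_bisim (fun u' u => R u u') (fun u' u h => hb u u' h)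
      (l + 1) _ _ hR h1'
    have hlek : l ≤ k := by
      have := hasB_upper' (K := k) h2'; omega
    omega
  · rintro S hS init tr ⟨e⟩
    haveI := hS
    let vk : ℕ → (Tat 0).Rt := fun k => ⟨Sum.inl ⟨(k, 0), by simp⟩, reaches_ak k⟩
    let st : ℕ → S := fun k =>
      ((e.toEquiv (vk k)).1).foldl (fun _ step => step.2) init
    obtain ⟨k, l, hkl, hst⟩ := Finite.exists_ne_map_eq_of_infinite st
    have key : ∀ i j : ℕ, st i = st j → i ≤ j := by
      intro i j hij
      have h1 : HasB (Tat 0) (vk i).1 (i + 1) :=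
        hasB_lower (i + 1) 0 i (by simp) (by omega)
      have h2 := (hasB_iso e (i + 1) (vk i)).mp h1
      have h3 := hasB_state tr init (i + 1) _ _ hij h2
      have h4 := (hasB_iso e (i + 1) (vk j)).mpr h3
      have h5 := hasB_upper' (K := 0) h4
      omega
    have := key k l hst
    have := key l k hst.symm
    omega
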